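/- Generalized Supercode Lemma: Let q be a prime power, n a positive integer, and let C ⊆ C' ⊆ F_q^n be F_q-linear codes (F_q-subspaces). Let r ≥ 1 be an integer such that dim_{F_q}(C') − dim_{F_q}(C) ≥ r. Then ρ_r(C) ≥ d_r(C'); that is, there exist vectors v_1, …, v_r ∈ F_q^n such that for every choice of codewords c_1, …, c_r ∈ C, the union of the supports of v_1 − c_1, …, v_r − c_r has cardinality at least d_r(C'). -/
import Mathlib

set_option synthInstance.maxHeartbeats 400000
set_option maxHeartbeats 1000000

/-- The support of a vector `v ∈ F^n` : the set of coordinate positions where `v` is nonzero. -/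
def vecSupp {F : Type*} [Field F] [DecidableEq F] {n : ℕ} (v : Fin n → F) : Finset (Fin n) :=
  Finset.univ.filter fun i => v i ≠ 0

/-- The support of a subspace `D ⊆ F^n` : the union of the supports of its elements. -/
def codeSupp {F : Type*} [Field F] {n : ℕ} (D : Submodule F (Fin n → F)) : Set (Fin n) :=
  {i | ∃ v ∈ D, v i ≠ 0}

/-- The `r`-th generalized Hamming weight of a linear code `C ⊆ F^n` : the minimum support
size of an `r`-dimensional subcode of `C`. -/
noncomputable def ghw {F : Type*} [Field F] {n : ℕ} (C : Submodule F (Fin n → F)) (r : ℕ) : ℕ :=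
  sInf {s | ∃ D : Submodule F (Fin n → F),
    D ≤ C ∧ Module.finrank F ↥D = r ∧ (codeSupp D).ncard = s}

/-- **The Generalized Supercode Lemma.** If `C ⊆ C' ⊆ F_q^n` are linear codes with
`dim C' − dim C ≥ r` (for `r ≥ 1`), then `ρ_r(C) ≥ d_r(C')`: there exist vectors
`v_1, …, v_r ∈ F_q^n` such that for every choice of codewords `c_1, …, c_r ∈ C`, the union of
the supports of `v_i − c_i` has cardinality at least `d_r(C')`. -/
theorem generalized_supercode_lemma {F : Type*} [Field F] [Fintype F] [DecidableEq F]
    {n : ℕ} (hn : 0 < n)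
    (C C' : Submodule F (Fin n → F)) (hsub : C ≤ C')
    (r : ℕ) (hr : 1 ≤ r)
    (hdim : Module.finrank F ↥C + r ≤ Module.finrank F ↥C') :
    ∃ v : Fin r → (Fin n → F),
      ∀ c : Fin r → (Fin n → F), (∀ i, c i ∈ C) →
        ghw C' r ≤ (Finset.univ.biUnion fun i => vecSupp (v i - c i)).card := by
  -- The image of C' in the quotient by C has finrank ≥ r
  have hmap : r ≤ Module.finrank F ↥(C'.map C.mkQ) := by
    have h1 : Module.finrank F ↥(C'.map C.mkQ) + Module.finrank F ↥C
        = Module.finrank F ↥C' := by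
      have h2 := LinearMap.finrank_range_add_finrank_ker (C.mkQ.comp C'.subtype)
      have hrange : LinearMap.range (C.mkQ.comp C'.subtype) = C'.map C.mkQ := by
        rw [LinearMap.range_comp, Submodule.range_subtype]
      have hker : LinearMap.ker (C.mkQ.comp C'.subtype) = Submodule.comap C'.subtype C := by
        rw [LinearMap.ker_comp, Submodule.ker_mkQ]
      have hk : Module.finrank F ↥(Submodule.comap C'.subtype C) = Module.finrank F ↥C :=
        (Submodule.comapSubtypeEquivOfLe hsub).finrank_eq
      rw [hrange, hker, hk] at h2
      exact h2
    omega
  obtain ⟨f, hf⟩ := exists_linearIndependent_of_le_finrank hmap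
  have hfc : LinearIndependent F (fun i => ((f i : (Fin n → F) ⧸ C))) :=
    hf.map' (C'.map C.mkQ).subtype (Submodule.ker_subtype _)
  have hlift : ∀ i, ∃ w, w ∈ C' ∧ C.mkQ w = (f i : (Fin n → F) ⧸ C) := by
    intro i
    have := (f i).2
    rw [Submodule.mem_map] at this
    obtain ⟨w, hw, hw2⟩ := this
    exact ⟨w, hw, hw2⟩
  choose v hvC' hvq using hlift
  refine ⟨v, fun c hc => ?_⟩
  -- the family v i - c i is linearly independent
  have hind : LinearIndependent F (fun i => v i - c i) := by
    apply LinearIndependent.of_comp C.mkQ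
    have : (C.mkQ ∘ fun i => v i - c i) = fun i => ((f i : (Fin n → F) ⧸ C)) := by
      funext i
      simp [Function.comp, map_sub, hvq i, (Submodule.Quotient.mk_eq_zero C).mpr (hc i),
        Submodule.mkQ_apply]
    rw [this]
    exact hfc
  set D : Submodule F (Fin n → F) := Submodule.span F (Set.range fun i => v i - c i) with hD
  have hDle : D ≤ C' := by
    rw [hD, Submodule.span_le]
    rintro _ ⟨i, rfl⟩
    exact C'.sub_mem (hvC' i) (hsub (hc i))
  have hDrank : Module.finrank F ↥D = r := by
    rw [hD, finrank_span_eq_card hind, Fintype.card_fin]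
  have hmem : (codeSupp D).ncard ∈ {s | ∃ D : Submodule F (Fin n → F),
      D ≤ C' ∧ Module.finrank F ↥D = r ∧ (codeSupp D).ncard = s} :=
    ⟨D, hDle, hDrank, rfl⟩
  refine le_trans (Nat.sInf_le hmem) ?_
  -- codeSupp D ⊆ union of supports
  have hsubset : codeSupp D ⊆ ↑(Finset.univ.biUnion fun i => vecSupp (v i - c i)) := by
    rintro j ⟨w, hw, hwj⟩
    by_contra hj
    simp only [Finset.coe_biUnion, Set.mem_iUnion, Finset.mem_coe, vecSupp,
      Finset.mem_filter, Finset.mem_univ, true_and, Finset.coe_univ, Set.mem_univ,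
      exists_true_left, not_exists, not_not] at hj
    have : D ≤ LinearMap.ker (LinearMap.proj j : (Fin n → F) →ₗ[F] F) := by
      rw [hD, Submodule.span_le]
      rintro _ ⟨i, rfl⟩
      exact hj i
    exact hwj (this hw)
  calc (codeSupp D).ncard
      ≤ (↑(Finset.univ.biUnion fun i => vecSupp (v i - c i)) : Set (Fin n)).ncard :=
        Set.ncard_le_ncard hsubset (Set.toFinite _)
    _ = (Finset.univ.biUnion fun i => vecSupp (v i - c i)).card := Set.ncard_coe_finset _
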